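/- Let X be a finite T₀-space and x ∈ X. Then x is a weak point (i.e., Û_x or F̂_x is contractible) if and only if the link Ĉ_x = Û_x ⊕ F̂_x is contractible. -/

import Mathlib

/-!
STATEMENT 1: Let X be a finite T₀-space and x ∈ X. Then x is a weak point
(i.e. Û_x or F̂_x is contractible) iff the link Ĉ_x = Û_x ⊕ F̂_x is contractible.

A finite T₀-space is identified with a finite poset with the down-set (Alexandrov)
topology; Û_x = {y : y < x}, F̂_x = {y : y > x}, Ĉ_x = {y : y < x ∨ y > x}, all with the
subspace topology.  (Note that, as subspaces of X, one has Ĉ_x = Û_x ⊕ F̂_x.)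
-/

noncomputable section

/-- The Alexandrov "down-set" topology on a poset: open sets are the lower sets. -/
def downTop (X : Type*) [Preorder X] : TopologicalSpace X := Topology.lowerSet X

/-- A subset `A` of a poset is contractible when, endowed with the subspace topology
coming from the down-set topology of the ambient poset, it is homotopy equivalent to a
point. -/
def SubContractible {X : Type*} [Preorder X] (A : Set X) : Prop :=
  @ContractibleSpace A (TopologicalSpace.induced Subtype.val (downTop X))

open Topology Relation Set unitInterval



section Basics
variable {P Q Z : Type*}

/-- Subspace of a lower-set topology is the lower-set topology of the induced order. -/
lemma induced_lowerSet_eq (X : Type*) [Preorder X] (A : Set X) :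
    TopologicalSpace.induced (Subtype.val : A → X) (Topology.lowerSet X)
      = Topology.lowerSet A := by
  apply TopologicalSpace.ext
  funext s
  apply propext
  constructor
  · rintro ⟨U, hU, rfl⟩
    exact IsLowerSet.preimage hU (fun _ _ h => h)
  · intro hs
    refine ⟨↑(lowerClosure (Subtype.val '' s)), (lowerClosure _).lower, ?_⟩
    ext ⟨y, hy⟩
    simp only [Set.mem_preimage, SetLike.mem_coe, mem_lowerClosure]
    constructor
    · rintro ⟨z, ⟨⟨w, hw⟩, hws, rfl⟩, hyz⟩
      exact hs (show (⟨y, hy⟩ : A) ≤ ⟨w, hw⟩ from hyz) hws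
    · intro h
      exact ⟨y, ⟨⟨y, hy⟩, h, rfl⟩, le_refl _⟩

variable [Preorder P] [Preorder Q] [TopologicalSpace P] [TopologicalSpace Q]
  [Topology.IsLowerSet P] [Topology.IsLowerSet Q]

/-- An order isomorphism of lower-set spaces is a homeomorphism. -/
def OrderIso.toLowerHomeomorph (e : P ≃o Q) : P ≃ₜ Q where
  toEquiv := e.toEquiv
  continuous_toFun := Topology.IsLowerSet.monotone_iff_continuous.1 e.monotone
  continuous_invFun := Topology.IsLowerSet.monotone_iff_continuous.1 e.symm.monotone

/-- A monotone map as a continuous map between lower-set spaces. -/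
def Monotone.toCM {f : P → Q} (hf : Monotone f) : C(P, Q) :=
  ⟨f, Topology.IsLowerSet.monotone_iff_continuous.1 hf⟩

lemma ContinuousMap.monotone' (f : C(P, Q)) : Monotone f :=
  Topology.IsLowerSet.monotone_iff_continuous.2 f.continuous

end Basics


variable {Z P : Type*} [TopologicalSpace Z] [Preorder P] [TopologicalSpace P]
  [Topology.IsLowerSet P]

/-- Pointwise-comparable continuous maps into a lower-set space are homotopic. -/
lemma homotopic_of_le {f g : C(Z, P)} (h : ∀ a, f a ≤ g a) : f.Homotopic g := by
  refine ⟨⟨⟨fun p => if p.1 = 1 then g p.2 else f p.2, ?_⟩, ?_, ?_⟩⟩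
  · rw [continuous_def]
    intro U hU
    have hls : IsLowerSet U := Topology.IsLowerSet.isOpen_iff_isLowerSet.1 hU
    have : (fun p : I × Z => if p.1 = 1 then g p.2 else f p.2) ⁻¹' U
        = ({t : I | t ≠ 1} ×ˢ (f ⁻¹' U)) ∪ (Set.univ ×ˢ (g ⁻¹' U)) := by
      ext ⟨t, a⟩
      simp only [Set.mem_preimage, Set.mem_union, Set.mem_prod, Set.mem_setOf_eq,
        Set.mem_univ, true_and, ne_eq]
      by_cases ht : t = 1
      · simp only [ht, if_pos rfl, not_true_eq_false, false_and, false_or, if_true]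
      · simp only [if_neg ht, ht, not_false_eq_true, true_and]
        constructor
        · intro hf; left; exact hf
        · rintro (hf | hg)
          · exact hf
          · exact hls (h a) hg
    rw [this]
    refine IsOpen.union (IsOpen.prod ?_ (f.continuous.isOpen_preimage U hU))
      (isOpen_univ.prod (g.continuous.isOpen_preimage U hU))
    exact isOpen_ne_fun continuous_id continuous_const
  · intro a; simp
  · intro a; simp

/-- Fence relation on continuous maps. -/
def FenceRel (Z P : Type*) [TopologicalSpace Z] [Preorder P] [TopologicalSpace P]
    (f g : C(Z, P)) : Prop := (∀ a, f a ≤ g a) ∨ (∀ a, g a ≤ f a)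

lemma fence_homotopic {f g : C(Z, P)} (h : ReflTransGen (FenceRel Z P) f g) :
    f.Homotopic g := by
  induction h with
  | refl => exact ContinuousMap.Homotopic.refl f
  | tail _ hbc ih =>
    refine ih.trans ?_
    rcases hbc with h1 | h1
    · exact homotopic_of_le h1
    · exact (homotopic_of_le h1).symm



variable {Z P : Type*} [TopologicalSpace Z] [Finite Z] [Preorder P] [TopologicalSpace P]
  [Topology.IsLowerSet P]

lemma isOpen_below (f : C(Z, P)) : IsOpen {g : C(Z, P) | ∀ a, g a ≤ f a} := by
  have : {g : C(Z, P) | ∀ a, g a ≤ f a} = ⋂ a, {g : C(Z, P) | MapsTo g {a} (Iic (f a))} := by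
    ext g
    simp [MapsTo]
  rw [this]
  exact isOpen_iInter_of_finite fun a =>
    ContinuousMap.isOpen_setOf_mapsTo isCompact_singleton
      (Topology.IsLowerSet.isOpen_iff_isLowerSet.2 (isLowerSet_Iic _))

lemma homotopic_fence {f g : C(Z, P)} (h : f.Homotopic g) :
    ReflTransGen (FenceRel Z P) f g := by
  obtain ⟨F⟩ := h
  set p : C(I, C(Z, P)) := F.curry with hp
  have hp0 : p 0 = f := by ext a; simp [hp]
  have hp1 : p 1 = g := by ext a; simp [hp]
  set T : Set I := {t | ReflTransGen (FenceRel Z P) f (p t)} with hT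
  have key : ∀ t, p ⁻¹' {g' : C(Z, P) | ∀ a, g' a ≤ p t a} ∈ nhds t := fun t =>
    (isOpen_below (p t)).preimage p.continuous |>.mem_nhds (by simp)
  have hto : IsOpen T := by
    rw [isOpen_iff_mem_nhds]
    intro t ht
    filter_upwards [key t] with s hs
    exact ht.tail (Or.inr hs)
  have htc : IsOpen Tᶜ := by
    rw [isOpen_iff_mem_nhds]
    intro t ht
    filter_upwards [key t] with s hs hsT
    exact ht (hsT.tail (Or.inl hs))
  have : T = univ := by
    rcases isClopen_iff.1 ⟨isOpen_compl_iff.1 htc, hto⟩ with h0 | h0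
    · exact absurd (show (0 : I) ∈ T by rw [hT, mem_setOf_eq, hp0]) (h0 ▸ notMem_empty _)
    · exact h0
  have h1 : (1 : I) ∈ T := this ▸ mem_univ _
  rwa [hT, mem_setOf_eq, hp1] at h1



def IsBeat {P : Type*} [Preorder P] (z : P) : Prop :=
  (∃ m, m < z ∧ ∀ y, y < z → y ≤ m) ∨ (∃ m, z < m ∧ ∀ y, z < y → m ≤ y)

section Rigid
variable {P : Type*} [PartialOrder P] [Finite P]

lemma eq_id_of_le (hnb : ∀ x : P, ¬ IsBeat x) {f : P → P} (hf : Monotone f)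
    (hle : ∀ x, f x ≤ x) : ∀ x, f x = x := by
  intro x
  induction x using WellFoundedLT.induction with
  | ind x ih =>
    by_contra hne
    have hlt : f x < x := (hle x).lt_of_ne hne
    exact hnb x (Or.inl ⟨f x, hlt, fun y hy => (ih y hy) ▸ hf hy.le⟩)

lemma eq_id_of_ge (hnb : ∀ x : P, ¬ IsBeat x) {f : P → P} (hf : Monotone f)
    (hle : ∀ x, x ≤ f x) : ∀ x, f x = x := by
  intro x
  induction x using WellFoundedGT.induction with
  | ind x ih =>
    by_contra hne
    have hlt : x < f x := (hle x).lt_of_ne (Ne.symm hne)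
    exact hnb x (Or.inr ⟨f x, hlt, fun y hy => (ih y hy) ▸ hf hy.le⟩)

end Rigid

section Subtype
variable {X : Type*} [Preorder X] [TopologicalSpace X] [Topology.IsLowerSet X]


instance Subtype.instIsLowerSet {p : X → Prop} : Topology.IsLowerSet (Subtype p) := by
  constructor
  show TopologicalSpace.induced _ _ = _
  rw [Topology.IsLowerSet.topology_eq X]
  exact induced_lowerSet_eq X {x | p x}

end Subtype
section Beat
variable {P : Type*} [PartialOrder P] [TopologicalSpace P] [Topology.IsLowerSet P]

/-- A poset with a minimum is contractible. -/
lemma contr_of_bot (m : P) (hm : ∀ y, m ≤ y) : ContractibleSpace P := by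
  rw [contractible_iff_id_nullhomotopic]
  exact ⟨m, (homotopic_of_le (f := ContinuousMap.const P m) (g := ContinuousMap.id P)
    fun a => hm a).symm⟩

/-- A poset with a maximum is contractible. -/
lemma contr_of_top (m : P) (hm : ∀ y, y ≤ m) : ContractibleSpace P := by
  rw [contractible_iff_id_nullhomotopic]
  exact ⟨m, homotopic_of_le (f := ContinuousMap.id P) (g := ContinuousMap.const P m)
    fun a => hm a⟩

/-- Removing a beat point gives a homotopy equivalent space. -/
lemma beat_hequiv {z : P} (hb : IsBeat z) :
    Nonempty (ContinuousMap.HomotopyEquiv {w : P // w ≠ z} P) := by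
  classical
  have hi : Monotone (Subtype.val : {w : P // w ≠ z} → P) := fun _ _ h => h
  rcases hb with ⟨m, hmz, hmax⟩ | ⟨m, hmz, hmin⟩
  · set r : P → {w : P // w ≠ z} := fun w => if h : w = z then ⟨m, hmz.ne⟩ else ⟨w, h⟩ with hr
    have hval : ∀ w, (r w : P) = if w = z then m else w := by
      intro w; by_cases h : w = z <;> simp [hr, h]
    have hrm : Monotone r := by
      intro a b hab
      show (r a : P) ≤ (r b : P)
      rw [hval, hval]
      by_cases ha : a = z
      · by_cases hb' : b = z
        · rw [if_pos ha, if_pos hb']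
        · rw [if_pos ha, if_neg hb']; exact hmz.le.trans (ha ▸ hab)
      · by_cases hb' : b = z
        · rw [if_neg ha, if_pos hb']; exact hmax a ((hb' ▸ hab).lt_of_ne ha)
        · rw [if_neg ha, if_neg hb']; exact hab
    have hri : ∀ w : {w : P // w ≠ z}, r w.val = w := by
      rintro ⟨w, hw⟩
      simp [hr, hw]
    refine ⟨⟨hi.toCM, hrm.toCM, ?_, ?_⟩⟩
    · have : hrm.toCM.comp hi.toCM = ContinuousMap.id _ := by
        ext w
        exact congrArg Subtype.val (hri w)
      rw [this]
    · apply homotopic_of_le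
      intro a
      show (r a : P) ≤ a
      rw [hval]
      by_cases ha : a = z
      · rw [if_pos ha, ha]; exact hmz.le
      · rw [if_neg ha]
  · set r : P → {w : P // w ≠ z} := fun w => if h : w = z then ⟨m, hmz.ne'⟩ else ⟨w, h⟩ with hr
    have hval : ∀ w, (r w : P) = if w = z then m else w := by
      intro w; by_cases h : w = z <;> simp [hr, h]
    have hrm : Monotone r := by
      intro a b hab
      show (r a : P) ≤ (r b : P)
      rw [hval, hval]
      by_cases ha : a = z
      · by_cases hb' : b = z
        · rw [if_pos ha, if_pos hb']
        · rw [if_pos ha, if_neg hb']; exact hmin b ((ha ▸ hab).lt_of_ne (Ne.symm hb'))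
      · by_cases hb' : b = z
        · rw [if_neg ha, if_pos hb']; exact (hb' ▸ hab).trans hmz.le
        · rw [if_neg ha, if_neg hb']; exact hab
    have hri : ∀ w : {w : P // w ≠ z}, r w.val = w := by
      rintro ⟨w, hw⟩
      simp [hr, hw]
    refine ⟨⟨hi.toCM, hrm.toCM, ?_, ?_⟩⟩
    · have : hrm.toCM.comp hi.toCM = ContinuousMap.id _ := by
        ext w
        exact congrArg Subtype.val (hri w)
      rw [this]
    · refine (homotopic_of_le ?_).symm
      intro a
      show a ≤ (r a : P)
      rw [hval]
      by_cases ha : a = z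
      · rw [if_pos ha, ha]; exact hmz.le
      · rw [if_neg ha]

end Beat
section Core

lemma beat_or_subsingleton (P : Type*) [PartialOrder P] [Finite P] [TopologicalSpace P]
    [Topology.IsLowerSet P] (hc : ContractibleSpace P) :
    (∃ z : P, IsBeat z) ∨ Subsingleton P := by
  by_cases hnb : ∃ z : P, IsBeat z
  · exact Or.inl hnb
  push_neg at hnb
  right
  obtain ⟨y, hy⟩ := (contractible_iff_id_nullhomotopic P).1 hc
  have key : ∀ g : C(P, P), ReflTransGen (FenceRel P P) (ContinuousMap.id P) g →
      ∀ a, g a = a := by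
    intro g hg
    induction hg with
    | refl => intro a; rfl
    | @tail b c _ hbc ih =>
      rcases hbc with h1 | h1
      · exact eq_id_of_ge hnb c.monotone' (fun a => (ih a).symm.le.trans (h1 a))
      · exact eq_id_of_le hnb c.monotone' (fun a => (h1 a).trans (ih a).le)
  have hy' := key _ (homotopic_fence hy)
  exact ⟨fun a b => ((hy' a).symm.trans (hy' b))⟩

end Core

/-- Contractibility with respect to the lower-set topology. -/
def LContr (P : Type*) [Preorder P] : Prop :=
  @ContractibleSpace P (Topology.lowerSet P)

lemma lcontr_iff (P : Type*) [Preorder P] [TopologicalSpace P] [Topology.IsLowerSet P] :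
    ContractibleSpace P ↔ LContr P := by
  rw [LContr, Topology.IsLowerSet.topology_eq P]

lemma LContr.congr {P Q : Type*} [Preorder P] [Preorder Q] (e : P ≃o Q) :
    LContr P ↔ LContr Q := by
  letI : TopologicalSpace P := Topology.lowerSet P
  letI : TopologicalSpace Q := Topology.lowerSet Q
  haveI : Topology.IsLowerSet P := ⟨rfl⟩
  haveI : Topology.IsLowerSet Q := ⟨rfl⟩
  rw [← lcontr_iff, ← lcontr_iff]
  exact (OrderIso.toLowerHomeomorph e).contractibleSpace_iff

/-- Removing a beat point preserves contractibility (both ways). -/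
lemma LContr.beat_congr {P : Type*} [PartialOrder P] {z : P} (hb : IsBeat z) :
    LContr {w : P // w ≠ z} ↔ LContr P := by
  letI : TopologicalSpace P := Topology.lowerSet P
  haveI : Topology.IsLowerSet P := ⟨rfl⟩
  rw [← lcontr_iff, ← lcontr_iff]
  obtain ⟨e⟩ := beat_hequiv hb
  exact e.contractibleSpace_iff
section Join
open Sum

variable {K L : Type*} [PartialOrder K] [PartialOrder L]

/-- Lift a self-map of `K` to `K ⊕ₗ L`. -/
private def liftMapL (f : K → K) : K ⊕ₗ L → K ⊕ₗ L :=
  fun w => toLex (Sum.map f id (ofLex w))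

private lemma liftMapL_mono {f : K → K} (hf : Monotone f) : Monotone (liftMapL (L := L) f) := by
  intro a b hab
  rw [Sum.Lex.le_def] at hab
  cases hab with
  | inl h => exact Sum.Lex.inl_le_inl_iff.2 (hf h)
  | inr h => exact Sum.Lex.inr_le_inr_iff.2 h
  | sep a b => exact Sum.Lex.inl_le_inr _ _

private def liftMapR (f : L → L) : K ⊕ₗ L → K ⊕ₗ L :=
  fun w => toLex (Sum.map id f (ofLex w))

private lemma liftMapR_mono {f : L → L} (hf : Monotone f) : Monotone (liftMapR (K := K) f) := by
  intro a b hab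
  rw [Sum.Lex.le_def] at hab
  cases hab with
  | inl h => exact Sum.Lex.inl_le_inl_iff.2 h
  | inr h => exact Sum.Lex.inr_le_inr_iff.2 (hf h)
  | sep a b => exact Sum.Lex.inl_le_inr _ _

lemma LContr.join_left [Finite K] (h : LContr K) : LContr (K ⊕ₗ L) := by
  letI : TopologicalSpace K := Topology.lowerSet K
  haveI : Topology.IsLowerSet K := ⟨rfl⟩
  letI : TopologicalSpace (K ⊕ₗ L) := Topology.lowerSet (K ⊕ₗ L)
  haveI : Topology.IsLowerSet (K ⊕ₗ L) := ⟨rfl⟩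
  rw [← lcontr_iff] at h ⊢
  obtain ⟨k₀, hk⟩ := (contractible_iff_id_nullhomotopic K).1 h
  have hfence := homotopic_fence hk
  set lift : C(K, K) → C(K ⊕ₗ L, K ⊕ₗ L) := fun f => (liftMapL_mono f.monotone').toCM with hlift
  have hliftapp : ∀ (f : C(K, K)) w, lift f w = liftMapL f w := fun _ _ => rfl
  have key : ∀ g : C(K, K), ReflTransGen (FenceRel K K) (ContinuousMap.id K) g →
      ReflTransGen (FenceRel (K ⊕ₗ L) (K ⊕ₗ L)) (ContinuousMap.id _) (lift g) := by
    intro g hg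
    induction hg with
    | refl =>
      have : lift (ContinuousMap.id K) = ContinuousMap.id _ := by
        ext w
        rcases w with k | l <;> rfl
      rw [this]
    | @tail b c _ hbc ih =>
      refine ih.tail ?_
      rcases hbc with h1 | h1
      · refine Or.inl fun w => ?_
        rcases w with k | l
        · exact Sum.Lex.inl_le_inl_iff.2 (h1 k)
        · exact le_refl _
      · refine Or.inr fun w => ?_
        rcases w with k | l
        · exact Sum.Lex.inl_le_inl_iff.2 (h1 k)
        · exact le_refl _
  have chain := (key _ hfence).tail
    (show FenceRel _ _ (lift (ContinuousMap.const K k₀))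
        (ContinuousMap.const _ (toLex (inl k₀))) from
      Or.inr fun w => by
        rcases w with k | l
        · exact le_refl _
        · exact Sum.Lex.inl_le_inr _ _)
  rw [contractible_iff_id_nullhomotopic]
  exact ⟨toLex (inl k₀), fence_homotopic chain⟩

lemma LContr.join_right [Finite L] (h : LContr L) : LContr (K ⊕ₗ L) := by
  letI : TopologicalSpace L := Topology.lowerSet L
  haveI : Topology.IsLowerSet L := ⟨rfl⟩
  letI : TopologicalSpace (K ⊕ₗ L) := Topology.lowerSet (K ⊕ₗ L)
  haveI : Topology.IsLowerSet (K ⊕ₗ L) := ⟨rfl⟩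
  rw [← lcontr_iff] at h ⊢
  obtain ⟨l₀, hl⟩ := (contractible_iff_id_nullhomotopic L).1 h
  have hfence := homotopic_fence hl
  set lift : C(L, L) → C(K ⊕ₗ L, K ⊕ₗ L) := fun f => (liftMapR_mono f.monotone').toCM with hlift
  have key : ∀ g : C(L, L), ReflTransGen (FenceRel L L) (ContinuousMap.id L) g →
      ReflTransGen (FenceRel (K ⊕ₗ L) (K ⊕ₗ L)) (ContinuousMap.id _) (lift g) := by
    intro g hg
    induction hg with
    | refl =>
      have : lift (ContinuousMap.id L) = ContinuousMap.id _ := by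
        ext w
        rcases w with k | l <;> rfl
      rw [this]
    | @tail b c _ hbc ih =>
      refine ih.tail ?_
      rcases hbc with h1 | h1
      · refine Or.inl fun w => ?_
        rcases w with k | l
        · exact le_refl _
        · exact Sum.Lex.inr_le_inr_iff.2 (h1 l)
      · refine Or.inr fun w => ?_
        rcases w with k | l
        · exact le_refl _
        · exact Sum.Lex.inr_le_inr_iff.2 (h1 l)
  have chain := (key _ hfence).tail
    (show FenceRel _ _ (lift (ContinuousMap.const L l₀))
        (ContinuousMap.const _ (toLex (inr l₀))) from
      Or.inl fun w => by
        rcases w with k | l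
        · exact Sum.Lex.inl_le_inr _ _
        · exact le_refl _)
  rw [contractible_iff_id_nullhomotopic]
  exact ⟨toLex (inr l₀), fence_homotopic chain⟩

end Join
section Isos
open Sum

variable {K L : Type*} [PartialOrder K] [PartialOrder L]

/-- `K ⊕ₗ L ≃o K` when `L` is empty. -/
def sumLexEmptyR [IsEmpty L] : K ⊕ₗ L ≃o K where
  toFun w := Sum.elim id (fun l => isEmptyElim l) (ofLex w)
  invFun k := toLex (inl k)
  left_inv := by rintro (k | l); exacts [rfl, isEmptyElim l]
  right_inv k := rfl
  map_rel_iff' := by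
    rintro (k | l) (k' | l')
    · exact Sum.Lex.inl_le_inl_iff.symm
    · exact isEmptyElim l'
    · exact isEmptyElim l
    · exact isEmptyElim l

/-- `K ⊕ₗ L ≃o L` when `K` is empty. -/
def sumLexEmptyL [IsEmpty K] : K ⊕ₗ L ≃o L where
  toFun w := Sum.elim (fun k => isEmptyElim k) id (ofLex w)
  invFun l := toLex (inr l)
  left_inv := by rintro (k | l); exacts [isEmptyElim k, rfl]
  right_inv l := rfl
  map_rel_iff' := by
    rintro (k | l) (k' | l')
    · exact isEmptyElim k
    · exact isEmptyElim k
    · exact isEmptyElim k'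
    · exact Sum.Lex.inr_le_inr_iff.symm

/-- Removing a point of the first factor of a lexicographic sum. -/
def removeInl (z : K) : {w : K ⊕ₗ L // w ≠ toLex (inl z)} ≃o ({k : K // k ≠ z} ⊕ₗ L) where
  toFun w :=
    match w with
    | ⟨Sum.inl k, h⟩ => toLex (inl (⟨k, fun hk => h (by subst hk; rfl)⟩ : {k : K // k ≠ z}))
    | ⟨Sum.inr l, _⟩ => toLex (inr l)
  invFun s :=
    match s with
    | Sum.inl k => ⟨toLex (inl k.1), fun h => k.2 (Sum.inl.inj (toLex.injective h))⟩
    | Sum.inr l => ⟨toLex (inr l), fun h => Sum.inr_ne_inl (toLex.injective h)⟩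
  left_inv := by rintro ⟨k | l, h⟩ <;> rfl
  right_inv := by rintro (⟨k, hk⟩ | l) <;> rfl
  map_rel_iff' := by
    rintro ⟨a | a, ha⟩ ⟨b | b, hb⟩
    · show toLex (inl _) ≤ toLex (inl _) ↔ _
      rw [Sum.Lex.inl_le_inl_iff, Subtype.mk_le_mk]
      exact Sum.Lex.inl_le_inl_iff.symm
    · show toLex (inl _) ≤ toLex (inr _) ↔ _
      exact iff_of_true (Sum.Lex.inl_le_inr _ _) (Sum.Lex.inl_le_inr _ _)
    · show toLex (inr _) ≤ toLex (inl _) ↔ _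
      exact iff_of_false Sum.Lex.not_inr_le_inl Sum.Lex.not_inr_le_inl
    · show toLex (inr _) ≤ toLex (inr _) ↔ _
      rw [Sum.Lex.inr_le_inr_iff]
      exact Sum.Lex.inr_le_inr_iff.symm

/-- Removing a point of the second factor of a lexicographic sum. -/
def removeInr (z : L) : {w : K ⊕ₗ L // w ≠ toLex (inr z)} ≃o (K ⊕ₗ {l : L // l ≠ z}) where
  toFun w :=
    match w with
    | ⟨Sum.inl k, _⟩ => toLex (inl k)
    | ⟨Sum.inr l, h⟩ => toLex (inr (⟨l, fun hl => h (by subst hl; rfl)⟩ : {l : L // l ≠ z}))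
  invFun s :=
    match s with
    | Sum.inl k => ⟨toLex (inl k), fun h => Sum.inl_ne_inr (toLex.injective h)⟩
    | Sum.inr l => ⟨toLex (inr l.1), fun h => l.2 (Sum.inr.inj (toLex.injective h))⟩
  left_inv := by rintro ⟨k | l, h⟩ <;> rfl
  right_inv := by rintro (k | ⟨l, hl⟩) <;> rfl
  map_rel_iff' := by
    rintro ⟨a | a, ha⟩ ⟨b | b, hb⟩
    · show toLex (inl _) ≤ toLex (inl _) ↔ _
      rw [Sum.Lex.inl_le_inl_iff]
      exact Sum.Lex.inl_le_inl_iff.symm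
    · show toLex (inl _) ≤ toLex (inr _) ↔ _
      exact iff_of_true (Sum.Lex.inl_le_inr _ _) (Sum.Lex.inl_le_inr _ _)
    · show toLex (inr _) ≤ toLex (inl _) ↔ _
      exact iff_of_false Sum.Lex.not_inr_le_inl Sum.Lex.not_inr_le_inl
    · show toLex (inr _) ≤ toLex (inr _) ↔ _
      rw [Sum.Lex.inr_le_inr_iff, Subtype.mk_le_mk]
      exact Sum.Lex.inr_le_inr_iff.symm

lemma beat_join_cases [Nonempty K] [Nonempty L] {w : K ⊕ₗ L} (hw : IsBeat w) :
    (∃ z : K, w = toLex (inl z) ∧ IsBeat z) ∨ (∃ z : L, w = toLex (inr z) ∧ IsBeat z) ∨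
      (∃ m : L, ∀ y, m ≤ y) ∨ (∃ m : K, ∀ y, y ≤ m) := by
  rcases w with z | z
  · rcases hw with ⟨m, hm, hmax⟩ | ⟨m, hm, hmin⟩
    · rcases m with m' | m''
      · exact Or.inl ⟨z, rfl, Or.inl ⟨m', Sum.Lex.inl_lt_inl_iff.1 hm,
          fun y hy => Sum.Lex.inl_le_inl_iff.1 (hmax (toLex (inl y)) (Sum.Lex.inl_lt_inl_iff.2 hy))⟩⟩
      · exact absurd hm Sum.Lex.not_inr_lt_inl
    · rcases m with m' | m''
      · exact Or.inl ⟨z, rfl, Or.inr ⟨m', Sum.Lex.inl_lt_inl_iff.1 hm,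
          fun y hy => Sum.Lex.inl_le_inl_iff.1 (hmin (toLex (inl y)) (Sum.Lex.inl_lt_inl_iff.2 hy))⟩⟩
      · exact Or.inr (Or.inr (Or.inl ⟨m'', fun l =>
          Sum.Lex.inr_le_inr_iff.1 (hmin (toLex (inr l)) (Sum.Lex.inl_lt_inr _ _))⟩))
  · rcases hw with ⟨m, hm, hmax⟩ | ⟨m, hm, hmin⟩
    · rcases m with m' | m''
      · exact Or.inr (Or.inr (Or.inr ⟨m', fun k =>
          Sum.Lex.inl_le_inl_iff.1 (hmax (toLex (inl k)) (Sum.Lex.inl_lt_inr _ _))⟩))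
      · exact Or.inr (Or.inl ⟨z, rfl, Or.inl ⟨m'', Sum.Lex.inr_lt_inr_iff.1 hm,
          fun y hy => Sum.Lex.inr_le_inr_iff.1 (hmax (toLex (inr y)) (Sum.Lex.inr_lt_inr_iff.2 hy))⟩⟩)
    · rcases m with m' | m''
      · exact absurd hm Sum.Lex.not_inr_lt_inl
      · exact Or.inr (Or.inl ⟨z, rfl, Or.inr ⟨m'', Sum.Lex.inr_lt_inr_iff.1 hm,
          fun y hy => Sum.Lex.inr_le_inr_iff.1 (hmin (toLex (inr y)) (Sum.Lex.inr_lt_inr_iff.2 hy))⟩⟩)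

end Isos
section Main
open Sum

lemma card_ne_lt {K : Type*} [Finite K] (z : K) : Nat.card {k : K // k ≠ z} < Nat.card K := by
  classical
  cases nonempty_fintype K
  simp only [Nat.card_eq_fintype_card]
  exact Fintype.card_subtype_lt (x := z) (by simp)

theorem join_contr_rev : ∀ (n : ℕ) (K L : Type) [PartialOrder K] [PartialOrder L]
    [Finite K] [Finite L], Nat.card K + Nat.card L ≤ n →
    LContr (K ⊕ₗ L) → LContr K ∨ LContr L := by
  intro n
  induction n using Nat.strong_induction_on with
  | _ n IH =>
    intro K L _ _ _ _ hn h
    by_cases hL : IsEmpty L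
    · exact Or.inl ((LContr.congr sumLexEmptyR).1 h)
    by_cases hK : IsEmpty K
    · exact Or.inr ((LContr.congr sumLexEmptyL).1 h)
    haveI : Nonempty K := not_isEmpty_iff.1 hK
    haveI : Nonempty L := not_isEmpty_iff.1 hL
    haveI : Finite (K ⊕ₗ L) := inferInstanceAs (Finite (K ⊕ L))
    letI : TopologicalSpace (K ⊕ₗ L) := Topology.lowerSet _
    haveI : Topology.IsLowerSet (K ⊕ₗ L) := ⟨rfl⟩
    have hc : ContractibleSpace (K ⊕ₗ L) := (lcontr_iff _).2 h
    rcases beat_or_subsingleton (K ⊕ₗ L) hc with ⟨w, hw⟩ | hss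
    · rcases beat_join_cases hw with ⟨z, rfl, hz⟩ | ⟨z, rfl, hz⟩ | ⟨m, hm⟩ | ⟨m, hm⟩
      · have h1 : LContr {w : K ⊕ₗ L // w ≠ toLex (inl z)} := (LContr.beat_congr hw).2 h
        have h2 : LContr ({k : K // k ≠ z} ⊕ₗ L) := (LContr.congr (removeInl z)).1 h1
        have hcard : Nat.card {k : K // k ≠ z} + Nat.card L < n :=
          lt_of_lt_of_le (Nat.add_lt_add_right (card_ne_lt z) _) hn
        rcases IH _ hcard {k : K // k ≠ z} L le_rfl h2 with h3 | h3
        · exact Or.inl ((LContr.beat_congr hz).1 h3)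
        · exact Or.inr h3
      · have h1 : LContr {w : K ⊕ₗ L // w ≠ toLex (inr z)} := (LContr.beat_congr hw).2 h
        have h2 : LContr (K ⊕ₗ {l : L // l ≠ z}) := (LContr.congr (removeInr z)).1 h1
        have hcard : Nat.card K + Nat.card {l : L // l ≠ z} < n :=
          lt_of_lt_of_le (Nat.add_lt_add_left (card_ne_lt z) _) hn
        rcases IH _ hcard K {l : L // l ≠ z} le_rfl h2 with h3 | h3
        · exact Or.inl h3
        · exact Or.inr ((LContr.beat_congr hz).1 h3)
      · right
        letI : TopologicalSpace L := Topology.lowerSet L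
        haveI : Topology.IsLowerSet L := ⟨rfl⟩
        exact (lcontr_iff L).1 (contr_of_bot m hm)
      · left
        letI : TopologicalSpace K := Topology.lowerSet K
        haveI : Topology.IsLowerSet K := ⟨rfl⟩
        exact (lcontr_iff K).1 (contr_of_top m hm)
    · exact absurd (toLex.injective
        (Subsingleton.elim (toLex (inl (Classical.arbitrary K))) (toLex (inr (Classical.arbitrary L)))))
        (fun hh => Sum.inl_ne_inr hh)

theorem join_contr_iff (K L : Type) [PartialOrder K] [PartialOrder L] [Finite K] [Finite L] :
    LContr (K ⊕ₗ L) ↔ LContr K ∨ LContr L := by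
  constructor
  · exact join_contr_rev _ K L le_rfl
  · rintro (h | h)
    · exact h.join_left
    · exact h.join_right

end Main
section Link
open Sum
open scoped Classical

variable {X : Type} [PartialOrder X]

/-- The link of `x` is the join of `Û_x` and `F̂_x`. -/
def linkIso (x : X) :
    ({y : X | y < x ∨ x < y} : Set X) ≃o
      (({y : X | y < x} : Set X) ⊕ₗ ({y : X | x < y} : Set X)) where
  toFun w := if h : w.1 < x then toLex (Sum.inl ⟨w.1, h⟩)
    else toLex (Sum.inr ⟨w.1, w.2.resolve_left h⟩)
  invFun s := Sum.elim (fun k => ⟨k.1, Or.inl k.2⟩) (fun l => ⟨l.1, Or.inr l.2⟩) (ofLex s)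
  left_inv := by
    rintro ⟨y, hy⟩
    dsimp only
    split_ifs with h <;> rfl
  right_inv := by
    rintro (⟨y, hy⟩ | ⟨y, hy⟩) <;> dsimp only <;> split_ifs with h
    · rfl
    · exact absurd hy h
    · exact absurd h (lt_asymm hy)
    · rfl
  map_rel_iff' := by
    rintro ⟨a, ha⟩ ⟨b, hb⟩
    show dite _ _ _ ≤ dite _ _ _ ↔ _
    by_cases h1 : a < x <;> by_cases h2 : b < x
    · rw [dif_pos h1, dif_pos h2, Sum.Lex.inl_le_inl_iff]
      exact Iff.rfl
    · rw [dif_pos h1, dif_neg h2]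
      exact iff_of_true (Sum.Lex.inl_le_inr _ _) (h1.trans (hb.resolve_left h2)).le
    · rw [dif_neg h1, dif_pos h2]
      exact iff_of_false Sum.Lex.not_inr_le_inl
        (fun hab => lt_irrefl x (((ha.resolve_left h1).trans_le hab).trans h2))
    · rw [dif_neg h1, dif_neg h2, Sum.Lex.inr_le_inr_iff]
      exact Iff.rfl

end Link

theorem weak_point_iff_link_contractible (X : Type) [PartialOrder X] [Fintype X] (x : X) :
    (SubContractible {y : X | y < x} ∨ SubContractible {y : X | x < y}) ↔
      SubContractible {y : X | y < x ∨ x < y} := by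
  have hsub : ∀ A : Set X, SubContractible A ↔ LContr A := by
    intro A
    rw [SubContractible, downTop, induced_lowerSet_eq, LContr]
  rw [hsub, hsub, hsub, LContr.congr (linkIso x),
    join_contr_iff]
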